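/- For the problem -ε u'' + u' = 2 on (0,1) with u(0) = u(1) = 0, the solution satisfies the a priori derivative bound |u'(x)| ≤ C(1 + ε^{-1} e^{-(1-x)/ε}) for all x ∈ [0,1], with constant C = 4, valid for all 0 < ε ≤ 1/2. -/

import Mathlib

open Real Set

theorem stmt_13 (ε : ℝ) (hε : 0 < ε) (hε2 : ε ≤ 1 / 2)
    (u : ℝ → ℝ)
    (hu : ∀ x : ℝ, u x = 2 * x +
      2 * (Real.exp (-1 / ε) - Real.exp (-(1 - x) / ε)) / (1 - Real.exp (-1 / ε))) :
    ∀ x ∈ Icc (0 : ℝ) 1,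
      |deriv u x| ≤ 4 * (1 + ε⁻¹ * Real.exp (-(1 - x) / ε)) := by
  intro x hx
  have hufun : u = fun y => 2 * y +
      2 * (Real.exp (-1 / ε) - Real.exp (-(1 - y) / ε)) / (1 - Real.exp (-1 / ε)) :=
    funext hu
  -- bound on exp(-1/ε)
  have hA : Real.exp (-1 / ε) ≤ 1 / 2 := by
    have h1 : (2:ℝ) ≤ 1 / ε := by
      rw [le_div_iff₀ hε]; linarith
    have h2 : (-1:ℝ) / ε ≤ -2 := by
      have : (-1:ℝ)/ε = -(1/ε) := by ring
      rw [this]; linarith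
    calc Real.exp (-1 / ε) ≤ Real.exp (-2) := Real.exp_le_exp.mpr h2
      _ = (Real.exp 2)⁻¹ := by rw [Real.exp_neg]
      _ ≤ 1 / 2 := by
          rw [one_div]
          apply inv_anti₀ (by norm_num)
          have := Real.add_one_le_exp (2:ℝ)
          linarith
  have hB : (1:ℝ)/2 ≤ 1 - Real.exp (-1 / ε) := by linarith
  have hBpos : 0 < 1 - Real.exp (-1 / ε) := by linarith
  -- derivative
  have hx1 : HasDerivAt (fun y : ℝ => -(1 - y) / ε) (1 / ε) x := by
    have heq : (fun y : ℝ => -(1 - y) / ε) = fun y => y / ε - 1 / ε := by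
      funext y; ring
    rw [heq]
    simpa using ((hasDerivAt_id x).div_const ε).sub_const (1 / ε)
  have hexp : HasDerivAt (fun y : ℝ => Real.exp (-(1 - y) / ε))
      (Real.exp (-(1 - x) / ε) * (1 / ε)) x := hx1.exp
  have hsub : HasDerivAt (fun y : ℝ => Real.exp (-1 / ε) - Real.exp (-(1 - y) / ε))
      (0 - Real.exp (-(1 - x) / ε) * (1 / ε)) x := (hasDerivAt_const x _).sub hexp
  have hmain : HasDerivAt u
      (2 * 1 + 2 * (0 - Real.exp (-(1 - x) / ε) * (1 / ε)) / (1 - Real.exp (-1 / ε))) x := by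
    rw [hufun]
    exact ((hasDerivAt_id x).const_mul 2).add ((hsub.const_mul 2).div_const _)
  rw [hmain.deriv]
  set E := Real.exp (-(1 - x) / ε) with hE
  have hEpos : 0 < E := Real.exp_pos _
  set B := 1 - Real.exp (-1 / ε) with hBdef
  have ht : 2 * (0 - E * (1 / ε)) / B = -(2 * E / ε / B) := by
    field_simp
    ring
  rw [ht]
  have htnn : 0 ≤ 2 * E / ε / B := by positivity
  have habs : |2 * 1 + -(2 * E / ε / B)| ≤ 2 + 2 * E / ε / B := by
    rw [abs_le]; constructor <;> [linarith [htnn]; linarith [htnn]]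
  refine habs.trans ?_
  have hkey : 2 * E / ε / B ≤ 4 * (ε⁻¹ * E) := by
    rw [div_le_iff₀ hBpos]
    have h1 : 2 * E / ε = 2 * (ε⁻¹ * E) := by field_simp
    have h2 : 0 ≤ ε⁻¹ * E := by positivity
    calc 2 * E / ε = 2 * (ε⁻¹ * E) := h1
      _ = 4 * (ε⁻¹ * E) * (1/2) := by ring
      _ ≤ 4 * (ε⁻¹ * E) * B := by
          apply mul_le_mul_of_nonneg_left hB (by positivity)
  linarith
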